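/- arXiv:2605.09592 — 4 statements merged into one kernel-verified Lean document; each statement's English description precedes it below -/
import Mathlib

section
/- Let p be a prime and D a positive integer with p > D² + D. Then there exists an integer a with 2 ≤ a ≤ D² + D such that the multiplicative order of a modulo p is strictly greater than D. -/
/-- Let `p` be a prime and `D` a positive integer with `p > D² + D`. Then there exists an
integer `a` with `2 ≤ a ≤ D² + D` whose multiplicative order modulo `p` exceeds `D`. -/
theorem exists_small_elt_of_large_order_mod_prime
    (p D : ℕ) (hp : p.Prime) (hD : 1 ≤ D) (hpD : D ^ 2 + D < p) :
    ∃ a : ℕ, 2 ≤ a ∧ a ≤ D ^ 2 + D ∧ D < orderOf (a : ZMod p) := by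
  haveI := Fact.mk hp
  by_contra hcon
  push_neg at hcon
  set N := D ^ 2 + D with hN
  -- Every residue of 1..N is a d-th root of unity for some 1 ≤ d ≤ D
  have key : ∀ a ∈ Finset.Icc 1 N, ∃ d ∈ Finset.Icc 1 D, ((a : ZMod p)) ^ d = 1 := by
    intro a ha
    simp only [Finset.mem_Icc] at ha
    rcases eq_or_lt_of_le ha.1 with h1 | h2
    · exact ⟨1, by simp [hD], by simp [← h1]⟩
    · have hap : a < p := lt_of_le_of_lt ha.2 hpD
      have hne : (a : ZMod p) ≠ 0 := by
        intro h
        have hdvd := (ZMod.natCast_eq_zero_iff a p).mp h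
        have := Nat.le_of_dvd (by omega) hdvd
        omega
      have hpow : (a : ZMod p) ^ (p - 1) = 1 := ZMod.pow_card_sub_one_eq_one hne
      have hfo : IsOfFinOrder ((a : ZMod p)) := by
        rw [isOfFinOrder_iff_pow_eq_one]
        exact ⟨p - 1, by omega, hpow⟩
      refine ⟨orderOf ((a : ZMod p)), ?_, pow_orderOf_eq_one _⟩
      simp only [Finset.mem_Icc]
      exact ⟨hfo.orderOf_pos, hcon a h2 ha.2⟩
  -- the image set
  set S : Finset (ZMod p) := (Finset.Icc 1 N).image (fun a : ℕ => (a : ZMod p)) with hS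
  set T : Finset (ZMod p) :=
    (Finset.Icc 1 D).biUnion (fun d => Polynomial.nthRootsFinset d (1 : ZMod p)) with hT
  have hsub : S ⊆ T := by
    intro x hx
    simp only [hS, Finset.mem_image] at hx
    obtain ⟨a, ha, rfl⟩ := hx
    obtain ⟨d, hd, hpow⟩ := key a ha
    simp only [Finset.mem_Icc] at hd
    refine Finset.mem_biUnion.mpr ⟨d, by simp [Finset.mem_Icc, hd.1, hd.2], ?_⟩
    rw [Polynomial.mem_nthRootsFinset (by omega)]
    exact hpow
  have hcardS : S.card = N := by
    rw [hS, Finset.card_image_of_injOn, Nat.card_Icc]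
    · omega
    · intro a ha b hb hab
      simp only [Finset.coe_Icc, Set.mem_Icc] at ha hb
      have ha' : a < p := lt_of_le_of_lt ha.2 hpD
      have hb' : b < p := lt_of_le_of_lt hb.2 hpD
      have := congrArg ZMod.val hab
      rwa [ZMod.val_cast_of_lt ha', ZMod.val_cast_of_lt hb'] at this
  have hcardT : T.card ≤ D * D := by
    calc T.card ≤ ∑ d ∈ Finset.Icc 1 D, (Polynomial.nthRootsFinset d (1 : ZMod p)).card :=
          Finset.card_biUnion_le
    _ ≤ ∑ d ∈ Finset.Icc 1 D, D := by
        refine Finset.sum_le_sum fun d hd => ?_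
        simp only [Finset.mem_Icc] at hd
        classical
        rw [Polynomial.nthRootsFinset_def]
        calc (Polynomial.nthRoots d (1 : ZMod p)).toFinset.card
            ≤ Multiset.card (Polynomial.nthRoots d (1 : ZMod p)) := Multiset.toFinset_card_le _
          _ ≤ d := Polynomial.card_nthRoots d (1 : ZMod p)
          _ ≤ D := hd.2
    _ = D * D := by
        rw [Finset.sum_const, smul_eq_mul, Nat.card_Icc]
        have h : D + 1 - 1 = D := by omega
        rw [h]
  have := Finset.card_le_card hsub
  have hDsq : D ^ 2 = D * D := sq D
  omega
end

section
/- Let N ≥ 2 and D ≥ 1 be integers, and suppose that every prime divisor of N is strictly greater than D² + D. Then there exists an integer a with 2 ≤ a ≤ D² + D such that gcd(a, N) = 1 and ord_N(a) > D. -/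
/-- Let `N ≥ 2` and `D ≥ 1` be integers, and suppose every prime divisor of `N` is
strictly greater than `D² + D`. Then there exists an integer `a` with `2 ≤ a ≤ D² + D`
such that `gcd(a, N) = 1` and `ord_N(a) > D`. -/
theorem exists_small_elt_of_large_order_mod_N
    (N D : ℕ) (hN : 2 ≤ N) (hD : 1 ≤ D)
    (h : ∀ p : ℕ, p.Prime → p ∣ N → D ^ 2 + D < p) :
    ∃ a : ℕ, 2 ≤ a ∧ a ≤ D ^ 2 + D ∧ Nat.Coprime a N ∧ D < orderOf (a : ZMod N) := by
  haveI : NeZero N := ⟨by omega⟩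
  have hDsq : 1 ≤ D ^ 2 := Nat.one_le_pow _ _ (by omega)
  -- every a in [1, D^2+D] is coprime to N
  have hcop : ∀ a : ℕ, 1 ≤ a → a ≤ D ^ 2 + D → Nat.Coprime a N := by
    intro a ha1 ha2
    by_contra hc
    obtain ⟨q, hq, hqa, hqN⟩ := Nat.Prime.not_coprime_iff_dvd.mp hc
    have h1 := h q hq hqN
    have h2 := Nat.le_of_dvd (by omega) hqa
    omega
  -- order of any coprime a is positive
  have hpos : ∀ a : ℕ, Nat.Coprime a N → 0 < orderOf ((a : ZMod N)) := by
    intro a hc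
    have he : ((ZMod.unitOfCoprime a hc : (ZMod N)ˣ) : ZMod N) = (a : ZMod N) :=
      ZMod.coe_unitOfCoprime a hc
    rw [← he, orderOf_units]
    exact orderOf_pos _
  by_contra hcon
  push_neg at hcon
  have hord : ∀ a : ℕ, 2 ≤ a → a ≤ D ^ 2 + D → orderOf ((a : ZMod N)) ≤ D := by
    intro a h1 h2
    exact hcon a h1 h2 (hcop a (by omega) h2)
  -- prime divisor of N
  set p := N.minFac with hp
  have hpprime : p.Prime := Nat.minFac_prime (by omega)
  have hpdvd : p ∣ N := N.minFac_dvd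
  have hplarge : D ^ 2 + D < p := h p hpprime hpdvd
  haveI : Fact p.Prime := ⟨hpprime⟩
  -- case D = 1
  rcases eq_or_lt_of_le hD with hD1 | hD2
  · have h2 := hord 2 le_rfl (by omega)
    have h2p := hpos 2 (hcop 2 (by omega) (by omega))
    have hone : orderOf ((2 : ℕ) : ZMod N) = 1 := by omega
    have h21 : ((2 : ℕ) : ZMod N) = 1 := orderOf_eq_one_iff.mp hone
    have heq : ((2 : ℕ) : ZMod N) = ((1 : ℕ) : ZMod N) := by simpa using h21
    have hmod := (ZMod.natCast_eq_natCast_iff' 2 1 N).mp heq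
    have hN3 : 2 < N := by
      have h4 := Nat.minFac_le (show 0 < N by omega)
      omega
    rw [Nat.mod_eq_of_lt hN3, Nat.mod_eq_of_lt (by omega : 1 < N)] at hmod
    omega
  · -- main case D ≥ 2 : counting roots mod p
    set f := ZMod.castHom hpdvd (ZMod p) with hf
    set S := Finset.Icc 2 (D ^ 2 + D) with hS
    set T := (Finset.Icc 1 D).biUnion
      (fun d => (Polynomial.nthRoots d (1 : ZMod p)).toFinset) with hT
    have hmem : ∀ a ∈ S, ((a : ZMod p)) ∈ T := by
      intro a ha
      rw [hS, Finset.mem_Icc] at ha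
      set d := orderOf ((a : ZMod N)) with hd
      have hd1 : 1 ≤ d := hpos a (hcop a (by omega) ha.2)
      have hdD : d ≤ D := hord a ha.1 ha.2
      have hpow : ((a : ZMod p)) ^ d = 1 := by
        have : f (((a : ZMod N)) ^ d) = f 1 := by rw [pow_orderOf_eq_one]
        simpa using this
      rw [hT, Finset.mem_biUnion]
      exact ⟨d, Finset.mem_Icc.mpr ⟨hd1, hdD⟩, Multiset.mem_toFinset.mpr
        ((Polynomial.mem_nthRoots (by omega)).mpr hpow)⟩
    have hinj : Set.InjOn (fun a : ℕ => ((a : ZMod p))) S := by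
      intro a ha b hb hab
      rw [hS, Finset.coe_Icc, Set.mem_Icc] at ha hb
      have ha' : a < p := by omega
      have hb' : b < p := by omega
      have := congrArg ZMod.val hab
      simpa [ZMod.val_natCast_of_lt ha', ZMod.val_natCast_of_lt hb'] using this
    have hcard1 : S.card = (S.image (fun a : ℕ => ((a : ZMod p)))).card :=
      (Finset.card_image_of_injOn hinj).symm
    have hsub : S.image (fun a : ℕ => ((a : ZMod p))) ⊆ T := by
      intro x hx
      obtain ⟨a, ha, rfl⟩ := Finset.mem_image.mp hx
      exact hmem a ha
    have hTcard : T.card ≤ ∑ d ∈ Finset.Icc 1 D, d := by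
      calc T.card ≤ ∑ d ∈ Finset.Icc 1 D, (Polynomial.nthRoots d (1 : ZMod p)).toFinset.card :=
            Finset.card_biUnion_le
        _ ≤ ∑ d ∈ Finset.Icc 1 D, d := by
            apply Finset.sum_le_sum
            intro d _
            calc (Polynomial.nthRoots d (1 : ZMod p)).toFinset.card
                ≤ Multiset.card (Polynomial.nthRoots d (1 : ZMod p)) :=
                  Multiset.toFinset_card_le _
              _ ≤ d := Polynomial.card_nthRoots d (1 : ZMod p)
    have hScard : S.card = D ^ 2 + D - 1 := by
      rw [hS, Nat.card_Icc]
      omega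
    have hsum0 : ∀ n : ℕ, (∑ d ∈ Finset.Icc 1 n, d) * 2 = (n + 1) * n := by
      intro n
      induction n with
      | zero => simp
      | succ k ih =>
        rw [Finset.sum_Icc_succ_top (by omega)]
        nlinarith [ih]
    have hsum := hsum0 D
    have hle : S.card ≤ T.card := by
      rw [hcard1]
      exact Finset.card_le_card hsub
    have hD2' : 2 ≤ D := hD2
    have hfin : D ^ 2 + D - 1 ≤ ∑ d ∈ Finset.Icc 1 D, d := by
      rw [← hScard]; exact le_trans hle hTcard
    have hD4 : 4 ≤ D ^ 2 := by nlinarith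
    have hsum2 : (∑ d ∈ Finset.Icc 1 D, d) * 2 = D ^ 2 + D := by rw [hsum]; ring
    omega
end

section
/- Let p be a prime and let M and y be positive integers with y < p. Suppose that a^M ≡ 1 (mod p) for every integer a with 1 ≤ a ≤ y. Then the number of y-smooth integers n with 1 ≤ n ≤ p − 1 is at most M. -/
lemma smooth_pow_eq_one (p M y : ℕ) (hp : p.Prime) (hM : 0 < M)
    (h : ∀ a : ℕ, 1 ≤ a → a ≤ y → a ^ M ≡ 1 [MOD p]) :
    ∀ n : ℕ, 1 ≤ n → (∀ q : ℕ, q.Prime → q ∣ n → q ≤ y) →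
      (n : ZMod p) ^ M = 1 := by
  intro n
  induction n using Nat.strong_induction_on with
  | _ n ih =>
    intro hn hsm
    rcases eq_or_lt_of_le hn with h1 | h1
    · simp [← h1]
    · obtain ⟨q, hq, hqd⟩ := Nat.exists_prime_and_dvd (by omega : n ≠ 1)
      obtain ⟨m, rfl⟩ := hqd
      have hq1 := hq.one_lt
      have hm1 : 1 ≤ m := by
        rcases Nat.eq_zero_or_pos m with rfl | hm; · simp at hn
        exact hm
      have hmlt : m < q * m := by nlinarith
      have hmy : (m : ZMod p) ^ M = 1 := by
        refine ih m hmlt hm1 (fun r hr hrd => hsm r hr (hrd.mul_left q))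
      have hqy : q ≤ y := hsm q hq ⟨m, rfl⟩
      have hqM : (q : ZMod p) ^ M = 1 := by
        have := h q hq.one_lt.le hqy
        have := (ZMod.natCast_eq_natCast_iff _ _ _).2 this
        push_cast at this
        simpa using this
      push_cast
      rw [mul_pow, hqM, hmy, mul_one]

/-- Let `p` be a prime and `M`, `y` positive integers with `y < p`. Suppose
`a^M ≡ 1 (mod p)` for every integer `1 ≤ a ≤ y`. Then the number of `y`-smooth integers
`n` with `1 ≤ n ≤ p − 1` is at most `M`. -/
theorem card_smooth_le_M
    (p M y : ℕ) (hp : p.Prime) (hM : 0 < M) (hy : 0 < y) (hyp : y < p)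
    (h : ∀ a : ℕ, 1 ≤ a → a ≤ y → a ^ M ≡ 1 [MOD p]) :
    {n : ℕ | 1 ≤ n ∧ n ≤ p - 1 ∧ ∀ q : ℕ, q.Prime → q ∣ n → q ≤ y}.ncard ≤ M := by
  haveI : Fact p.Prime := ⟨hp⟩
  set S : Set ℕ := {n : ℕ | 1 ≤ n ∧ n ≤ p - 1 ∧ ∀ q : ℕ, q.Prime → q ∣ n → q ≤ y}
  have hp1 : 1 ≤ p := hp.one_lt.le
  -- the roots finset
  set T : Finset (ZMod p) := (Polynomial.nthRoots M (1 : ZMod p)).toFinset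
  have hmaps : ∀ n ∈ S, (n : ZMod p) ∈ T := by
    intro n hn
    obtain ⟨h1, h2, h3⟩ := hn
    simp only [T, Multiset.mem_toFinset, Polynomial.mem_nthRoots hM]
    exact smooth_pow_eq_one p M y hp hM h n h1 h3
  have hinj : Set.InjOn (fun n : ℕ => (n : ZMod p)) S := by
    intro a ha b hb hab
    have ha' : a < p := by have := ha.2.1; omega
    have hb' : b < p := by have := hb.2.1; omega
    have := ZMod.val_cast_of_lt ha'
    have := ZMod.val_cast_of_lt hb'
    simp only at hab
    rw [← ZMod.val_cast_of_lt ha', ← ZMod.val_cast_of_lt hb', hab]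
  calc S.ncard = (S.image (fun n : ℕ => (n : ZMod p))).ncard :=
        (Set.ncard_image_of_injOn hinj).symm
    _ ≤ T.card := by
        rw [← Set.ncard_coe_finset]
        exact Set.ncard_le_ncard (by rintro x ⟨n, hn, rfl⟩; exact hmaps n hn) T.finite_toSet
    _ ≤ M := by
        simpa using (Multiset.toFinset_card_le _).trans (Polynomial.card_nthRoots M (1 : ZMod p))
end

section
/- Let N ≥ 2 and let s and M be positive integers. Suppose that every integer a with 2 ≤ a ≤ s is coprime to N and satisfies a^M ≡ 1 (mod N). Then M ≥ s. -/
/-- Let `N ≥ 2` and `s`, `M` positive integers. Suppose every integer `2 ≤ a ≤ s` is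
coprime to `N` and satisfies `a^M ≡ 1 (mod N)`. Then `M ≥ s`. -/
theorem M_ge_s_of_pow_eq_one_mod_N
    (N s M : ℕ) (hN : 2 ≤ N) (hs : 0 < s) (hM : 0 < M)
    (h : ∀ a : ℕ, 2 ≤ a → a ≤ s → Nat.Coprime a N ∧ a ^ M ≡ 1 [MOD N]) :
    s ≤ M := by
  obtain ⟨p, pp, pd⟩ := Nat.exists_prime_and_dvd (by omega : N ≠ 1)
  haveI : Fact p.Prime := ⟨pp⟩
  -- every prime divisor of N exceeds s
  have hps : s < p := by
    by_contra hle
    push_neg at hle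
    have h2 : 2 ≤ p := pp.two_le
    have hcop := (h p h2 hle).1
    have : p = 1 := Nat.Coprime.eq_one_of_dvd hcop pd
    omega
  -- each a in Icc 1 s gives a root of X^M = 1 in ZMod p
  have hroot : ∀ a ∈ Finset.Icc 1 s, ((a : ZMod p)) ^ M = 1 := by
    intro a ha
    simp only [Finset.mem_Icc] at ha
    rcases Nat.lt_or_ge a 2 with h1 | h2
    · have : a = 1 := by omega
      simp [this]
    · have hmod : a ^ M ≡ 1 [MOD p] := ((h a h2 ha.2).2).of_dvd pd
      have : ((a ^ M : ℕ) : ZMod p) = ((1 : ℕ) : ZMod p) :=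
        (ZMod.natCast_eq_natCast_iff _ _ _).mpr hmod
      simpa using this
  -- the images are distinct in ZMod p
  have hinj : Set.InjOn (fun a : ℕ => (a : ZMod p)) (Finset.Icc 1 s) := by
    intro a ha b hb hab
    simp only [Finset.coe_Icc, Set.mem_Icc] at ha hb
    have hap : a < p := by omega
    have hbp : b < p := by omega
    have := congrArg ZMod.val hab
    rwa [ZMod.val_natCast_of_lt hap, ZMod.val_natCast_of_lt hbp] at this
  -- count roots
  have hsub : (Finset.Icc 1 s).image (fun a : ℕ => (a : ZMod p)) ⊆
      (Polynomial.nthRoots M (1 : ZMod p)).toFinset := by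
    intro x hx
    simp only [Finset.mem_image] at hx
    obtain ⟨a, ha, rfl⟩ := hx
    rw [Multiset.mem_toFinset, Polynomial.mem_nthRoots hM]
    exact hroot a ha
  calc s = (Finset.Icc 1 s).card := by simp
    _ = ((Finset.Icc 1 s).image (fun a : ℕ => (a : ZMod p))).card :=
        (Finset.card_image_of_injOn hinj).symm
    _ ≤ (Polynomial.nthRoots M (1 : ZMod p)).toFinset.card := Finset.card_le_card hsub
    _ ≤ Multiset.card (Polynomial.nthRoots M (1 : ZMod p)) := Multiset.toFinset_card_le _
    _ ≤ M := Polynomial.card_nthRoots M 1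
end
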